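/- The SCAD proximal operator over the nonnegative half-line agrees with the unconstrained SCAD proximal operator on nonnegative inputs and is zero on negative inputs: let σ > 0, α > 0 and ρ > 1 + α, let r be the SCAD penalty with parameters σ and ρ, and define P(z) = max(z − σα, 0) for 0 ≤ z ≤ σ(1 + α), P(z) = ((ρ − 1)z − ρσα)/(ρ − 1 − α) for σ(1 + α) < z ≤ ρσ, and P(z) = z for z > ρσ. Then for every z ∈ ℝ, a global minimizer over {x ∈ ℝ : x ≥ 0} of x ↦ r(x) + (1/(2α))(x − z)² is P(z) if z ≥ 0, and 0 if z < 0. -/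

import Mathlib

/-- The SCAD penalty with parameters `σ > 0` and `ρ > 1`:
`r(x) = σ|x|` for `|x| ≤ σ`, `r(x) = (−x² + 2ρσ|x| − σ²)/(2(ρ − 1))` for `σ < |x| ≤ ρσ`,
and `r(x) = σ²(ρ + 1)/2` for `|x| > ρσ`. -/
noncomputable def scad (σ ρ x : ℝ) : ℝ :=
  if |x| ≤ σ then σ * |x|
  else if |x| ≤ ρ * σ then (-x ^ 2 + 2 * ρ * σ * |x| - σ ^ 2) / (2 * (ρ - 1))
  else σ ^ 2 * (ρ + 1) / 2

/-- The (nonnegative-branch) SCAD proximal map `P`: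
`P(z) = max (z − σα) 0` for `z ≤ σ(1+α)`, `P(z) = ((ρ−1)z − ρσα)/(ρ−1−α)` for
`σ(1+α) < z ≤ ρσ`, and `P(z) = z` for `z > ρσ`. -/
noncomputable def scadProxPos (σ ρ α z : ℝ) : ℝ :=
  if z ≤ σ * (1 + α) then max (z - σ * α) 0
  else if z ≤ ρ * σ then ((ρ - 1) * z - ρ * σ * α) / (ρ - 1 - α)
  else z

set_option maxHeartbeats 1000000 in
/-- The SCAD proximal operator over the nonnegative half-line agrees with the
unconstrained SCAD proximal operator on nonnegative inputs and is zero on negative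
inputs: for `σ > 0`, `α > 0`, `ρ > 1 + α` and every `z ∈ ℝ`, the point
`if 0 ≤ z then P z else 0` is a global minimizer over `{x : 0 ≤ x}` of
`x ↦ scad σ ρ x + (1/(2α)) * (x - z)^2`. -/
theorem scad_nonneg_prox_closed_form (σ ρ α : ℝ) (hσ : 0 < σ) (hα : 0 < α)
    (hρ : 1 + α < ρ) (z : ℝ) :
    ∀ x : ℝ, 0 ≤ x →
      scad σ ρ (if 0 ≤ z then scadProxPos σ ρ α z else 0) +
          (1 / (2 * α)) * ((if 0 ≤ z then scadProxPos σ ρ α z else 0) - z) ^ 2 ≤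
        scad σ ρ x + (1 / (2 * α)) * (x - z) ^ 2 := by
  intro x hx
  have h1 : (0:ℝ) < ρ - 1 := by linarith
  have hβ : (0:ℝ) < ρ - 1 - α := by linarith
  have h1' : (ρ - 1) ≠ 0 := ne_of_gt h1
  have hβ' : (ρ - 1 - α) ≠ 0 := ne_of_gt hβ
  have hα' : α ≠ 0 := ne_of_gt hα
  have hρσ : σ < ρ * σ := by nlinarith
  have hs1 : ∀ y : ℝ, 0 ≤ y → y ≤ σ → scad σ ρ y = σ * y := by
    intro y h0 hy; rw [scad, abs_of_nonneg h0, if_pos hy]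
  have hs2 : ∀ y : ℝ, 0 ≤ y → σ < y → y ≤ ρ * σ →
      scad σ ρ y = (-y ^ 2 + 2 * ρ * σ * y - σ ^ 2) / (2 * (ρ - 1)) := by
    intro y h0 hy1 hy2
    rw [scad, abs_of_nonneg h0, if_neg (not_le.2 hy1), if_pos hy2]
  have hs3 : ∀ y : ℝ, 0 ≤ y → ρ * σ < y → scad σ ρ y = σ ^ 2 * (ρ + 1) / 2 := by
    intro y h0 hy
    rw [scad, abs_of_nonneg h0, if_neg (not_le.2 (lt_trans hρσ hy)),
      if_neg (not_le.2 hy)]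
  rcases lt_or_ge z 0 with hz | hz
  · -- z < 0 : candidate is 0
    rw [if_neg (not_le.2 hz), hs1 0 le_rfl hσ.le]
    rcases le_or_gt x σ with hxa | hxa
    · rw [hs1 x hx hxa]
      rw [← sub_nonneg]; field_simp
      first
      | (apply div_nonneg _ (by positivity)
         nlinarith [mul_nonneg hx (by linarith : (0:ℝ) ≤ -z), mul_nonneg hσ.le hx])
      | nlinarith [mul_nonneg hx (by linarith : (0:ℝ) ≤ -z), mul_nonneg hσ.le hx,
          mul_nonneg hα.le (mul_nonneg hx (by linarith : (0:ℝ) ≤ -z))]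
    · rcases le_or_gt x (ρ * σ) with hxb | hxb
      · rw [hs2 x hx hxa hxb]
        rw [← sub_nonneg]; field_simp
        nlinarith [mul_nonneg (mul_nonneg (mul_nonneg hα.le hα.le) (by linarith : (0:ℝ) ≤ x - σ)) (by linarith : (0:ℝ) ≤ ρ*σ - x),
          mul_nonneg (mul_nonneg (mul_nonneg hα.le h1.le) hx) (by linarith : (0:ℝ) ≤ -z),
          mul_nonneg (mul_nonneg (mul_nonneg (mul_nonneg hα.le hα.le) hσ.le) h1.le) (by linarith : (0:ℝ) ≤ x + σ),
          mul_nonneg (mul_nonneg hα.le h1.le) (sq_nonneg x)]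
      · rw [hs3 x hx hxb]
        rw [← sub_nonneg]; field_simp
        nlinarith [mul_nonneg hx (by linarith : (0:ℝ) ≤ -z), sq_nonneg x,
          mul_pos hα (mul_pos (mul_pos hσ hσ) (by linarith : (0:ℝ) < ρ + 1))]
  · -- 0 ≤ z
    rw [if_pos hz]
    rcases le_or_gt z (σ * (1 + α)) with hza | hza
    · -- z ≤ σ(1+α)
      rw [scadProxPos, if_pos hza]
      rcases le_or_gt z (σ * α) with hzb | hzb
      · -- max = 0
        have hm : max (z - σ * α) 0 = 0 := max_eq_right (by linarith)
        rw [hm, hs1 0 le_rfl hσ.le]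
        rcases le_or_gt x σ with hxa | hxa
        · rw [hs1 x hx hxa]
          rw [← sub_nonneg]; field_simp
          nlinarith [mul_nonneg hx (by linarith : (0:ℝ) ≤ 2*α*σ + x - 2*z)]
        · rcases le_or_gt x (ρ * σ) with hxb | hxb
          · rw [hs2 x hx hxa hxb]
            rw [← sub_nonneg]; field_simp
            nlinarith [mul_nonneg (mul_nonneg h1.le hx) (by linarith : (0:ℝ) ≤ σ*α - z),
              mul_nonneg (mul_nonneg hα.le hσ.le) (by linarith : (0:ℝ) ≤ x - σ),
              mul_nonneg hβ.le (sq_nonneg x),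
              mul_nonneg (mul_nonneg hα.le hσ.le) hσ.le]
          · rw [hs3 x hx hxb]
            rw [← sub_nonneg]; field_simp
            nlinarith [mul_nonneg (mul_nonneg hα.le (by linarith : (0:ℝ) ≤ x - ρ*σ)) (by nlinarith : (0:ℝ) ≤ x + ρ*σ - 2*z),
              mul_nonneg (mul_nonneg hα.le (by nlinarith : (0:ℝ) ≤ 2*ρ*σ)) (by linarith : (0:ℝ) ≤ σ*α - z),
              mul_nonneg (mul_nonneg hα.le (mul_nonneg hσ.le hσ.le)) (by nlinarith : (0:ℝ) ≤ ρ*(ρ-α) + α)]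
      · -- σα < z ≤ σ(1+α): candidate z - σα
        have hm : max (z - σ * α) 0 = z - σ * α := max_eq_left (by linarith)
        have hq0 : (0:ℝ) ≤ z - σ * α := by linarith
        have hqσ : z - σ * α ≤ σ := by nlinarith
        rw [hm, hs1 _ hq0 hqσ]
        rcases le_or_gt x σ with hxa | hxa
        · rw [hs1 x hx hxa]
          rw [← sub_nonneg]; field_simp
          nlinarith [sq_nonneg (x - z + σ*α)]
        · rcases le_or_gt x (ρ * σ) with hxb | hxb
          · rw [hs2 x hx hxa hxb]
            rw [← sub_nonneg]; field_simp
            nlinarith [mul_nonneg (mul_nonneg hα.le h1.le) (sq_nonneg (σ + σ*α - z)),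
              mul_nonneg (mul_nonneg (mul_nonneg hα.le h1.le) (by linarith : (0:ℝ) ≤ σ*(1+α) - z)) (by linarith : (0:ℝ) ≤ x - σ),
              mul_nonneg (mul_nonneg hα.le hβ.le) (sq_nonneg (x - σ))]
          · rw [hs3 x hx hxb]
            rw [← sub_nonneg]; field_simp
            nlinarith [mul_nonneg (by linarith : (0:ℝ) ≤ x - ρ*σ) (by nlinarith [mul_pos hσ hβ] : (0:ℝ) ≤ x + ρ*σ - 2*z),
              mul_nonneg (by linarith : (0:ℝ) ≤ σ*(1+α) - z) (by nlinarith [mul_pos hσ hβ] : (0:ℝ) ≤ 2*ρ*σ + 2*σ*α - z - σ*(1+α)),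
              mul_nonneg (sq_nonneg σ) (mul_nonneg hβ.le h1.le)]
    · rcases le_or_gt z (ρ * σ) with hzb | hzb
      · -- σ(1+α) < z ≤ ρσ: candidate q = ((ρ-1)z - ρσα)/(ρ-1-α)
        have hq1 : σ < ((ρ - 1) * z - ρ * σ * α) / (ρ - 1 - α) := by
          rw [lt_div_iff₀ hβ]; nlinarith
        have hq2 : ((ρ - 1) * z - ρ * σ * α) / (ρ - 1 - α) ≤ ρ * σ := by
          rw [div_le_iff₀ hβ]; nlinarith
        obtain ⟨Q, hQ, hQ1, hQ2⟩ : ∃ Q : ℝ, (ρ - 1 - α) * Q = (ρ - 1) * z - ρ * σ * α ∧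
            σ < Q ∧ Q ≤ ρ * σ :=
          ⟨((ρ - 1) * z - ρ * σ * α) / (ρ - 1 - α), by field_simp, hq1, hq2⟩
        have hrwq : scadProxPos σ ρ α z = Q := by
          rw [scadProxPos, if_neg (not_le.2 hza), if_pos hzb, div_eq_iff hβ']
          linarith [hQ]
        have hzQ : z = ((ρ - 1 - α) * Q + ρ * σ * α) / (ρ - 1) := by
          rw [eq_div_iff h1']; linarith [hQ]
        rw [hrwq, hs2 Q (by linarith) hQ1 hQ2, hzQ]
        rcases le_or_gt x σ with hxa | hxa
        · rw [hs1 x hx hxa]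
          have hT : 0 ≤ 2 * ((ρ - 1 - α) * Q + ρ * σ * α) - (ρ - 1) * (x + σ + 2 * α * σ) := by
            nlinarith [hQ, mul_nonneg h1.le (by linarith : (0:ℝ) ≤ 2*z - x - σ - 2*α*σ)]
          rw [← sub_nonneg]; field_simp
          nlinarith [mul_nonneg (mul_nonneg h1.le (by linarith : (0:ℝ) ≤ σ - x)) hT,
            mul_nonneg (mul_nonneg h1.le hβ.le) (sq_nonneg (σ - Q))]
        · rcases le_or_gt x (ρ * σ) with hxb | hxb
          · rw [hs2 x hx hxa hxb]
            rw [← sub_nonneg]; field_simp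
            nlinarith [mul_nonneg (mul_nonneg hα.le hβ.le) (sq_nonneg (x - Q)),
              mul_nonneg (mul_nonneg (mul_nonneg hα.le hα.le) hβ.le) (sq_nonneg (x - Q)),
              mul_nonneg (mul_nonneg (mul_nonneg hα.le h1.le) hβ.le) (sq_nonneg (x - Q))]
          · rw [hs3 x hx hxb]
            have hT : 0 ≤ (ρ - 1) * (x + ρ * σ) - 2 * ((ρ - 1 - α) * Q + ρ * σ * α) := by
              nlinarith [hQ, mul_nonneg h1.le (by linarith : (0:ℝ) ≤ x + ρ*σ - 2*z)]
            rw [← sub_nonneg]; field_simp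
            nlinarith [mul_nonneg (mul_nonneg (mul_nonneg hα.le
                (by positivity : (0:ℝ) ≤ (ρ-1)^4)) (by linarith : (0:ℝ) ≤ x - ρ*σ)) hT,
              mul_nonneg (mul_nonneg (mul_nonneg (mul_nonneg hα.le hα.le)
                (by positivity : (0:ℝ) ≤ (ρ-1)^4)) hβ.le) (sq_nonneg (ρ*σ - Q))]
      · -- z > ρσ: candidate z
        rw [scadProxPos, if_neg (not_le.2 hza), if_neg (not_le.2 hzb),
          hs3 z hz hzb]
        rcases le_or_gt x σ with hxa | hxa
        · rw [hs1 x hx hxa]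
          rw [← sub_nonneg]; field_simp
          nlinarith [mul_nonneg (by linarith : (0:ℝ) ≤ σ - x) (by linarith : (0:ℝ) ≤ 2*z - x - σ - 2*α*σ),
            mul_nonneg (by linarith : (0:ℝ) ≤ z - ρ*σ) (by nlinarith : (0:ℝ) ≤ z + ρ*σ - 2*σ),
            mul_nonneg (mul_nonneg h1.le hβ.le) (mul_nonneg hσ.le hσ.le)]
        · rcases le_or_gt x (ρ * σ) with hxb | hxb
          · rw [hs2 x hx hxa hxb]
            rw [← sub_nonneg]; field_simp
            nlinarith [mul_nonneg (by linarith : (0:ℝ) ≤ ρ*σ - x)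
                (by nlinarith : (0:ℝ) ≤ 2*((ρ-1)*z - ρ*σ*α) - (ρ-1-α)*(x + ρ*σ)),
              sq_nonneg (ρ*σ - z), mul_nonneg h1.le (sq_nonneg (ρ*σ - z))]
          · rw [hs3 x hx hxb]
            have hc : (0:ℝ) ≤ 1 / (2*α) * (x - z)^2 := by positivity
            nlinarith [hc]
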